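/- Let Γ̂ be a δ-hyperbolic spider's web of bounded valence associated to a rooted tree T whose counting measure satisfies c·a^r ≤ μ(B_r^T(x)) ≤ C·b^r for all vertices x and integers r ≥ 1 (with 1 < a ≤ b). Then there exist positive constants c', C' such that c'·a^r ≤ μ(B_r^{Γ̂}(x)) ≤ C'·b^r for every vertex x and every positive integer r. -/

import Mathlib

/-- A spider's web: a graph `G` obtained from a rooted tree `T` (root `o`,
predecessor map `p`, level function `lvl`) by adding edges, such that added edges
only join vertices of the same level, and two same-level neighbours have
predecessors that coincide or are neighbours. -/
structure SpiderWeb (V : Type*) where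
  G : SimpleGraph V
  T : SimpleGraph V
  o : V
  p : V → V
  lvl : V → ℕ
  lvl_root : lvl o = 0
  root_eq : ∀ x, lvl x = 0 → x = o
  p_lvl : ∀ x, x ≠ o → lvl (p x) + 1 = lvl x
  T_adj : ∀ x y, T.Adj x y ↔ (x ≠ o ∧ p x = y) ∨ (y ≠ o ∧ p y = x)
  T_le_G : T ≤ G
  T_connected : T.Connected
  adj_lvl : ∀ x y, G.Adj x y → ¬ T.Adj x y → lvl x = lvl y
  horiz : ∀ x y, G.Adj x y → lvl x = lvl y → p x = p y ∨ G.Adj (p x) (p y)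

noncomputable def gromovProd {V : Type*} (d : V → V → ℕ) (x y w : V) : ℝ :=
  ((d w x : ℝ) + (d w y : ℝ) - (d x y : ℝ)) / 2

namespace SpiderWeb

variable {V : Type*} (S : SpiderWeb V)

lemma g_conn : S.G.Connected := S.T_connected.mono S.T_le_G

lemma dist_le_T (x y : V) : S.G.dist x y ≤ S.T.dist x y := by
  obtain ⟨p, hp⟩ := S.T_connected.exists_walk_length_eq_dist x y
  calc S.G.dist x y ≤ (p.map (SimpleGraph.Hom.ofLE S.T_le_G)).length :=
      SimpleGraph.dist_le _
    _ = p.length := SimpleGraph.Walk.length_map _ p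
    _ = S.T.dist x y := hp

lemma lvl_adj {x y : V} (h : S.G.Adj x y) : S.lvl y ≤ S.lvl x + 1 := by
  by_cases ht : S.T.Adj x y
  · rcases (S.T_adj x y).mp ht with ⟨hx, hpx⟩ | ⟨hy, hpy⟩
    · have := S.p_lvl x hx; rw [hpx] at this; omega
    · have := S.p_lvl y hy; rw [hpy] at this; omega
  · rw [S.adj_lvl x y h ht]; omega

lemma lvl_le_walk {x y : V} (p : S.G.Walk x y) : S.lvl y ≤ S.lvl x + p.length := by
  induction p with
  | nil => simp
  | @cons x b y h q ih =>
      have := S.lvl_adj h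
      simp only [SimpleGraph.Walk.length_cons]
      omega

lemma lvl_le_dist (x y : V) : S.lvl y ≤ S.lvl x + S.G.dist x y := by
  obtain ⟨p, hp⟩ := S.g_conn.exists_walk_length_eq_dist x y
  have := S.lvl_le_walk p
  omega

lemma anc_spec : ∀ (s : ℕ) (x : V), s ≤ S.lvl x →
    S.lvl (S.p^[s] x) + s = S.lvl x ∧ S.T.dist x (S.p^[s] x) ≤ s := by
  intro s
  induction s with
  | zero => intro x _; simp
  | succ s ih =>
      intro x h
      have hxo : x ≠ S.o := by
        intro he; rw [he, S.lvl_root] at h; omega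
      have hp := S.p_lvl x hxo
      have ih' := ih (S.p x) (by omega)
      rw [Function.iterate_succ_apply]
      refine ⟨by omega, ?_⟩
      have hadj : S.T.Adj x (S.p x) := (S.T_adj x (S.p x)).mpr (Or.inl ⟨hxo, rfl⟩)
      have h1 : S.T.dist x (S.p x) ≤ 1 := by
        have := SimpleGraph.dist_le (SimpleGraph.Walk.cons hadj SimpleGraph.Walk.nil)
        simpa using this
      calc S.T.dist x (S.p^[s] (S.p x))
          ≤ S.T.dist x (S.p x) + S.T.dist (S.p x) (S.p^[s] (S.p x)) :=
            S.T_connected.dist_triangle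
        _ ≤ s + 1 := by omega

lemma anc_dist {s : ℕ} {x : V} (h : s ≤ S.lvl x) :
    S.lvl (S.p^[s] x) + s = S.lvl x ∧ S.G.dist x (S.p^[s] x) = s ∧
      S.T.dist x (S.p^[s] x) = s := by
  obtain ⟨h1, h2⟩ := S.anc_spec s x h
  have h3 : S.G.dist x (S.p^[s] x) ≤ s := le_trans (S.dist_le_T _ _) h2
  have h4 := S.lvl_le_dist (S.p^[s] x) x
  have h4' : S.G.dist (S.p^[s] x) x = S.G.dist x (S.p^[s] x) := SimpleGraph.dist_comm
  rw [h4'] at h4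
  have h6 := S.dist_le_T x (S.p^[s] x)
  exact ⟨h1, by omega, by omega⟩

lemma dist_root (x : V) : S.G.dist S.o x = S.lvl x := by
  obtain ⟨h1, h2, -⟩ := S.anc_dist (le_refl (S.lvl x)) (x := x)
  have h0 : S.lvl (S.p^[S.lvl x] x) = 0 := by omega
  have := S.root_eq _ h0
  rw [SimpleGraph.dist_comm, ← this]
  omega

lemma key (δ : ℝ) (hδ : 0 ≤ δ)
    (hhyp : ∀ w x y z : V,
      gromovProd S.G.dist x z w ≥
        min (gromovProd S.G.dist x y w) (gromovProd S.G.dist y z w) - δ)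
    (x z : V) :
    ∃ s : ℕ, ∃ v : V, ((S.G.dist (S.p^[s] x) v : ℝ) ≤ 4 * δ) ∧
      S.T.dist v z + s ≤ S.G.dist x z + 2 := by
  have hox : S.G.dist S.o x = S.lvl x := S.dist_root x
  have hoz : S.G.dist S.o z = S.lvl z := S.dist_root z
  set g : ℝ := gromovProd S.G.dist x z S.o with hg
  have hgval : g = ((S.lvl x : ℝ) + S.lvl z - S.G.dist x z) / 2 := by
    rw [hg, gromovProd, hox, hoz]
  have hlzx : S.lvl z ≤ S.lvl x + S.G.dist x z := S.lvl_le_dist x z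
  have hlxz : S.lvl x ≤ S.lvl z + S.G.dist x z := by
    have h := S.lvl_le_dist z x
    have hc : S.G.dist z x = S.G.dist x z := SimpleGraph.dist_comm
    omega
  have htri : (S.G.dist x z : ℝ) ≤ (S.lvl x : ℝ) + S.lvl z := by
    have h1 : S.G.dist x z ≤ S.G.dist x S.o + S.G.dist S.o z :=
      S.g_conn.dist_triangle
    have h2 : S.G.dist x S.o = S.G.dist S.o x := SimpleGraph.dist_comm
    have : S.G.dist x z ≤ S.lvl x + S.lvl z := by omega
    exact_mod_cast this
  have hg0 : 0 ≤ g := by rw [hgval]; linarith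
  have hgx : g ≤ (S.lvl x : ℝ) := by
    rw [hgval]
    have : (S.lvl z : ℝ) ≤ (S.lvl x : ℝ) + S.G.dist x z := by exact_mod_cast hlzx
    linarith
  have hgz : g ≤ (S.lvl z : ℝ) := by
    rw [hgval]
    have : (S.lvl x : ℝ) ≤ (S.lvl z : ℝ) + S.G.dist x z := by exact_mod_cast hlxz
    linarith
  set ℓ : ℕ := ⌊g⌋₊ with hℓ
  have hℓg : (ℓ : ℝ) ≤ g := Nat.floor_le hg0
  have hgℓ : g < ℓ + 1 := Nat.lt_floor_add_one g
  have hℓx : ℓ ≤ S.lvl x := by exact_mod_cast hℓg.trans hgx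
  have hℓz : ℓ ≤ S.lvl z := by exact_mod_cast hℓg.trans hgz
  set s := S.lvl x - ℓ with hs
  set t := S.lvl z - ℓ with ht
  obtain ⟨hy1, hy2, hy3⟩ := S.anc_dist (s := s) (x := x) (Nat.sub_le _ _)
  obtain ⟨hz1, hz2, hz3⟩ := S.anc_dist (s := t) (x := z) (Nat.sub_le _ _)
  have hly : S.lvl (S.p^[s] x) = ℓ := by omega
  have hly' : S.lvl (S.p^[t] z) = ℓ := by omega
  have hsr : (s : ℝ) = (S.lvl x : ℝ) - ℓ := by
    rw [hs]; push_cast [hℓx]; ring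
  have htr : (t : ℝ) = (S.lvl z : ℝ) - ℓ := by
    rw [ht]; push_cast [hℓz]; ring
  have hroot_y : S.G.dist S.o (S.p^[s] x) = ℓ := by rw [S.dist_root, hly]
  have hroot_y' : S.G.dist S.o (S.p^[t] z) = ℓ := by rw [S.dist_root, hly']
  have hdyx : S.G.dist (S.p^[s] x) x = s := by
    rw [SimpleGraph.dist_comm]; exact hy2
  have hdzy' : S.G.dist z (S.p^[t] z) = t := hz2
  have hyxval : gromovProd S.G.dist (S.p^[s] x) x S.o = (ℓ : ℝ) := by
    rw [gromovProd, hroot_y, hox, hdyx]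
    rw [hsr]; ring
  have hzy'val : gromovProd S.G.dist z (S.p^[t] z) S.o = (ℓ : ℝ) := by
    rw [gromovProd, hoz, hroot_y', hdzy']
    rw [htr]; ring
  have h1 : gromovProd S.G.dist (S.p^[s] x) z S.o ≥ (ℓ : ℝ) - δ := by
    have h := hhyp S.o (S.p^[s] x) x z
    rw [hyxval, ← hg] at h
    rw [min_eq_left hℓg] at h
    exact h
  have h2 : gromovProd S.G.dist (S.p^[s] x) (S.p^[t] z) S.o ≥ (ℓ : ℝ) - 2 * δ := by
    have h := hhyp S.o (S.p^[s] x) z (S.p^[t] z)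
    rw [hzy'val] at h
    have hmin : (ℓ : ℝ) - δ ≤
        min (gromovProd S.G.dist (S.p^[s] x) z S.o) (ℓ : ℝ) :=
      le_min h1 (by linarith)
    linarith
  have hyy' : (S.G.dist (S.p^[s] x) (S.p^[t] z) : ℝ) ≤ 4 * δ := by
    rw [gromovProd, hroot_y, hroot_y'] at h2
    linarith
  refine ⟨s, S.p^[t] z, hyy', ?_⟩
  have hty' : S.T.dist (S.p^[t] z) z = t := by
    rw [SimpleGraph.dist_comm]; exact hz3
  have hkey : ((t + s : ℕ) : ℝ) < (S.G.dist x z : ℝ) + 3 := by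
    push_cast
    rw [hgval] at hgℓ
    linarith
  have hkey' : t + s < S.G.dist x z + 3 := by exact_mod_cast hkey
  omega

lemma ncard_biUnion_le' {α ι : Type*} (s : Finset ι) (f : ι → Set α) :
    (⋃ i ∈ s, f i).ncard ≤ ∑ i ∈ s, (f i).ncard := by
  classical
  induction s using Finset.induction_on with
  | empty => simp
  | @insert a s ha ih =>
      rw [Finset.set_biUnion_insert, Finset.sum_insert ha]
      exact le_trans (Set.ncard_union_le _ _) (by omega)

lemma ballG (M : ℕ)
    (hval : ∀ x : V, (S.G.neighborSet x).Finite ∧ (S.G.neighborSet x).ncard ≤ M) :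
    ∀ (n : ℕ) (u : V), {z | S.G.dist u z ≤ n}.Finite ∧
      {z | S.G.dist u z ≤ n}.ncard ≤ (M + 1) ^ n := by
  intro n
  induction n with
  | zero =>
      intro u
      have hset : {z | S.G.dist u z ≤ 0} = {u} := by
        ext w
        simp only [Set.mem_setOf_eq, Nat.le_zero, Set.mem_singleton_iff]
        rw [S.g_conn.dist_eq_zero_iff]
        exact eq_comm
      rw [hset]
      simp
  | succ n ih =>
      intro u
      classical
      have hfin := (ih u).1
      set F : Finset V := hfin.toFinset with hF
      have hsub : {z | S.G.dist u z ≤ n + 1} ⊆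
          ⋃ v ∈ F, insert v (S.G.neighborSet v) := by
        intro w hw
        simp only [Set.mem_setOf_eq] at hw
        by_cases hle : S.G.dist u w ≤ n
        · refine Set.mem_iUnion₂.mpr ⟨w, ?_, Set.mem_insert _ _⟩
          rw [hF, Set.Finite.mem_toFinset]
          exact hle
        · have hd : S.G.dist u w = n + 1 := by omega
          obtain ⟨pw, hpw⟩ := S.g_conn.exists_walk_length_eq_dist w u
          have hcomm : S.G.dist w u = S.G.dist u w := SimpleGraph.dist_comm
          cases pw with
          | nil =>
              rw [SimpleGraph.Walk.length_nil] at hpw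
              rw [SimpleGraph.dist_self] at hd
              omega
          | @cons _ b _ hadj q =>
              rw [SimpleGraph.Walk.length_cons] at hpw
              have hqb : S.G.dist u b ≤ n := by
                have h5 := SimpleGraph.dist_le q.reverse
                rw [SimpleGraph.Walk.length_reverse] at h5
                omega
              refine Set.mem_iUnion₂.mpr ⟨b, ?_, Or.inr ?_⟩
              · rw [hF, Set.Finite.mem_toFinset]
                exact hqb
              · exact hadj.symm
      have hUfin : (⋃ v ∈ F, insert v (S.G.neighborSet v)).Finite :=
        Set.Finite.biUnion F.finite_toSet (fun v _ => (hval v).1.insert v)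
      constructor
      · exact hUfin.subset hsub
      · have h1 : {z | S.G.dist u z ≤ n + 1}.ncard ≤
            (⋃ v ∈ F, insert v (S.G.neighborSet v)).ncard :=
          Set.ncard_le_ncard hsub hUfin
        have h2 : (⋃ v ∈ F, insert v (S.G.neighborSet v)).ncard ≤
            ∑ v ∈ F, (insert v (S.G.neighborSet v)).ncard :=
          ncard_biUnion_le' F _
        have h3 : ∑ v ∈ F, (insert v (S.G.neighborSet v)).ncard ≤
            ∑ _v ∈ F, (M + 1) := by
          refine Finset.sum_le_sum fun v _ => ?_
          have := Set.ncard_insert_le v (S.G.neighborSet v)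
          have := (hval v).2
          omega
        have h4 : ∑ _v ∈ F, (M + 1) = F.card * (M + 1) := by
          rw [Finset.sum_const, smul_eq_mul]
        have h5 : F.card ≤ (M + 1) ^ n := by
          have := (ih u).2
          rwa [Set.ncard_eq_toFinset_card _ hfin] at this
        calc {z | S.G.dist u z ≤ n + 1}.ncard
            ≤ F.card * (M + 1) := by omega
          _ ≤ (M + 1) ^ n * (M + 1) := Nat.mul_le_mul_right _ h5
          _ = (M + 1) ^ (n + 1) := (pow_succ _ _).symm

lemma geom_aux {b : ℝ} (hb : 1 < b) (n : ℕ) :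
    ∑ s ∈ Finset.range n, b ^ (n - s) ≤ b ^ (n + 1) / (b - 1) := by
  have hb0 : (0:ℝ) < b - 1 := by linarith
  have hbpos : (0:ℝ) < b := by linarith
  have h1 : ∑ s ∈ Finset.range n, b ^ (n - s)
      = ∑ s ∈ Finset.range n, (fun j => b ^ (j + 1)) (n - 1 - s) :=
    Finset.sum_congr rfl fun s hs => by
      rw [Finset.mem_range] at hs
      simp only []
      congr 1
      omega
  rw [h1, Finset.sum_range_reflect (fun j => b ^ (j + 1)) n]
  have h2 : ∑ j ∈ Finset.range n, b ^ (j + 1) = b * ∑ j ∈ Finset.range n, b ^ j := by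
    rw [Finset.mul_sum]
    exact Finset.sum_congr rfl fun j _ => by ring
  rw [h2, geom_sum_eq (by linarith : b ≠ 1)]
  have h3 : b * ((b ^ n - 1) / (b - 1)) = (b ^ (n + 1) - b) / (b - 1) := by
    field_simp
    ring
  rw [h3, div_le_div_iff_of_pos_right hb0]
  linarith

end SpiderWeb

/-- If a δ-hyperbolic spider's web of bounded valence has tree balls of
pinched exponential volume (`c·a^r ≤ #B_r^T(x) ≤ C·b^r` for integers `r ≥ 1`), then
its graph balls also satisfy pinched exponential volume bounds with the same `a, b`. -/
theorem stmt_9 {V : Type*} (S : SpiderWeb V) (δ a b c C : ℝ) (M : ℕ) (hδ : 0 ≤ δ)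
    (ha : 1 < a) (hab : a ≤ b) (hc : 0 < c) (hC : 0 < C)
    (hhyp : ∀ w x y z : V,
      gromovProd S.G.dist x z w ≥
        min (gromovProd S.G.dist x y w) (gromovProd S.G.dist y z w) - δ)
    (hval : ∀ x : V, (S.G.neighborSet x).Finite ∧ ((S.G.neighborSet x).ncard : ℕ) ≤ M)
    (hvol : ∀ (x : V) (r : ℕ), 1 ≤ r →
      c * a ^ r ≤ (({z | S.T.dist x z ≤ r} : Set V).ncard : ℝ) ∧
        (({z | S.T.dist x z ≤ r} : Set V).ncard : ℝ) ≤ C * b ^ r) :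
    ∃ c' C' : ℝ, 0 < c' ∧ 0 < C' ∧ ∀ (x : V) (r : ℕ), 1 ≤ r →
      c' * a ^ r ≤ (({z | S.G.dist x z ≤ r} : Set V).ncard : ℝ) ∧
        (({z | S.G.dist x z ≤ r} : Set V).ncard : ℝ) ≤ C' * b ^ r := by
  classical
  have hb : (1:ℝ) < b := lt_of_lt_of_le ha hab
  have hb1 : (0:ℝ) < b - 1 := by linarith
  have hbpos : (0:ℝ) < b := by linarith
  set D : ℕ := ⌊4 * δ⌋₊ with hD
  have hGfin := S.ballG M hval
  -- T-balls of radius ≥ 1 are finite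
  have hTfin : ∀ (v : V) (m : ℕ), 1 ≤ m → ({z | S.T.dist v z ≤ m} : Set V).Finite := by
    intro v m hm
    by_contra hinf
    have h0 := (hvol v m hm).1
    rw [Set.Infinite.ncard hinf] at h0
    have hpos : (0:ℝ) < c * a ^ m := by positivity
    simp only [Nat.cast_zero] at h0
    linarith
  have hTfin' : ∀ (v : V) (m : ℕ), ({z | S.T.dist v z ≤ m} : Set V).Finite := by
    intro v m
    refine (hTfin v (m + 1) (by omega)).subset ?_
    intro z hz
    simp only [Set.mem_setOf_eq] at *
    omega
  refine ⟨c, ((M:ℝ) + 1) ^ D * C * (b ^ 4 / (b - 1)), hc, by positivity, ?_⟩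
  intro x r hr
  constructor
  · -- lower bound
    have hsub : {z | S.T.dist x z ≤ r} ⊆ {z | S.G.dist x z ≤ r} := by
      intro z hz
      simp only [Set.mem_setOf_eq] at *
      exact le_trans (S.dist_le_T x z) hz
    have hle := Set.ncard_le_ncard hsub (hGfin r x).1
    calc c * a ^ r ≤ (({z | S.T.dist x z ≤ r} : Set V).ncard : ℝ) := (hvol x r hr).1
      _ ≤ (({z | S.G.dist x z ≤ r} : Set V).ncard : ℝ) := Nat.cast_le.mpr hle
  · -- upper bound
    have hcov : {z | S.G.dist x z ≤ r} ⊆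
        ⋃ s ∈ Finset.range (r + 3), ⋃ v ∈ (hGfin D (S.p^[s] x)).1.toFinset,
          {z | S.T.dist v z ≤ r + 2 - s} := by
      intro z hz
      simp only [Set.mem_setOf_eq] at hz
      obtain ⟨s, v, hv1, hv2⟩ := S.key δ hδ hhyp x z
      have hs3 : s < r + 3 := by omega
      have hvD : S.G.dist (S.p^[s] x) v ≤ D := Nat.le_floor hv1
      refine Set.mem_iUnion₂.mpr ⟨s, Finset.mem_range.mpr hs3,
        Set.mem_iUnion₂.mpr ⟨v, ?_, ?_⟩⟩
      · rw [Set.Finite.mem_toFinset]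
        exact hvD
      · simp only [Set.mem_setOf_eq]
        omega
    have hslicefin : ∀ s : ℕ,
        (⋃ v ∈ (hGfin D (S.p^[s] x)).1.toFinset,
          {z | S.T.dist v z ≤ r + 2 - s} : Set V).Finite := by
      intro s
      exact Set.Finite.biUnion (Finset.finite_toSet _) fun v _ => hTfin' v (r + 2 - s)
    have hBfin : (⋃ s ∈ Finset.range (r + 3), ⋃ v ∈ (hGfin D (S.p^[s] x)).1.toFinset,
        {z | S.T.dist v z ≤ r + 2 - s} : Set V).Finite :=
      Set.Finite.biUnion (Finset.finite_toSet _) fun s _ => hslicefin s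
    have hslice : ∀ s ∈ Finset.range (r + 3),
        (((⋃ v ∈ (hGfin D (S.p^[s] x)).1.toFinset,
            {z | S.T.dist v z ≤ r + 2 - s} : Set V).ncard : ℝ))
          ≤ ((M:ℝ) + 1) ^ D * (C * b ^ (r + 3 - s)) := by
      intro s hs
      rw [Finset.mem_range] at hs
      have hstep1 := SpiderWeb.ncard_biUnion_le' ((hGfin D (S.p^[s] x)).1.toFinset)
        (fun v => {z | S.T.dist v z ≤ r + 2 - s})
      have hcard : (((hGfin D (S.p^[s] x)).1.toFinset.card : ℕ) : ℝ) ≤ ((M:ℝ) + 1) ^ D := by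
        have h := (hGfin D (S.p^[s] x)).2
        rw [Set.ncard_eq_toFinset_card _ (hGfin D (S.p^[s] x)).1] at h
        calc (((hGfin D (S.p^[s] x)).1.toFinset.card : ℕ) : ℝ)
            ≤ (((M + 1) ^ D : ℕ) : ℝ) := Nat.cast_le.mpr h
          _ = ((M:ℝ) + 1) ^ D := by push_cast; ring
      have hterm : ∀ v : V,
          (({z | S.T.dist v z ≤ r + 2 - s} : Set V).ncard : ℝ) ≤ C * b ^ (r + 3 - s) := by
        intro v
        have hsub2 : {z | S.T.dist v z ≤ r + 2 - s} ⊆ {z | S.T.dist v z ≤ r + 3 - s} := by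
          intro z hz
          simp only [Set.mem_setOf_eq] at *
          omega
        have h1 := Set.ncard_le_ncard hsub2 (hTfin v (r + 3 - s) (by omega))
        calc (({z | S.T.dist v z ≤ r + 2 - s} : Set V).ncard : ℝ)
            ≤ (({z | S.T.dist v z ≤ r + 3 - s} : Set V).ncard : ℝ) := Nat.cast_le.mpr h1
          _ ≤ C * b ^ (r + 3 - s) := (hvol v (r + 3 - s) (by omega)).2
      calc (((⋃ v ∈ (hGfin D (S.p^[s] x)).1.toFinset,
            {z | S.T.dist v z ≤ r + 2 - s} : Set V).ncard : ℝ))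
          ≤ ((∑ v ∈ (hGfin D (S.p^[s] x)).1.toFinset,
              ({z | S.T.dist v z ≤ r + 2 - s} : Set V).ncard : ℕ) : ℝ) :=
            Nat.cast_le.mpr hstep1
        _ = ∑ v ∈ (hGfin D (S.p^[s] x)).1.toFinset,
              (({z | S.T.dist v z ≤ r + 2 - s} : Set V).ncard : ℝ) := by push_cast; rfl
        _ ≤ ∑ _v ∈ (hGfin D (S.p^[s] x)).1.toFinset, (C * b ^ (r + 3 - s)) :=
            Finset.sum_le_sum fun v _ => hterm v
        _ = ((hGfin D (S.p^[s] x)).1.toFinset.card : ℝ) * (C * b ^ (r + 3 - s)) := by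
            rw [Finset.sum_const, nsmul_eq_mul]
        _ ≤ ((M:ℝ) + 1) ^ D * (C * b ^ (r + 3 - s)) := by
            apply mul_le_mul_of_nonneg_right hcard (by positivity)
    have h0 := Set.ncard_le_ncard hcov hBfin
    have h1 := SpiderWeb.ncard_biUnion_le' (Finset.range (r + 3))
      (fun s => ⋃ v ∈ (hGfin D (S.p^[s] x)).1.toFinset, {z | S.T.dist v z ≤ r + 2 - s})
    have h2 : (({z | S.G.dist x z ≤ r} : Set V).ncard : ℝ)
        ≤ ∑ s ∈ Finset.range (r + 3), ((M:ℝ) + 1) ^ D * (C * b ^ (r + 3 - s)) := by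
      calc (({z | S.G.dist x z ≤ r} : Set V).ncard : ℝ)
          ≤ ((∑ s ∈ Finset.range (r + 3),
              (⋃ v ∈ (hGfin D (S.p^[s] x)).1.toFinset,
                {z | S.T.dist v z ≤ r + 2 - s} : Set V).ncard : ℕ) : ℝ) :=
            Nat.cast_le.mpr (le_trans h0 h1)
        _ = ∑ s ∈ Finset.range (r + 3),
              ((⋃ v ∈ (hGfin D (S.p^[s] x)).1.toFinset,
                {z | S.T.dist v z ≤ r + 2 - s} : Set V).ncard : ℝ) := by push_cast; rfl
        _ ≤ ∑ s ∈ Finset.range (r + 3), ((M:ℝ) + 1) ^ D * (C * b ^ (r + 3 - s)) :=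
            Finset.sum_le_sum hslice
    have h3 : ∑ s ∈ Finset.range (r + 3), ((M:ℝ) + 1) ^ D * (C * b ^ (r + 3 - s))
        = ((M:ℝ) + 1) ^ D * C * ∑ s ∈ Finset.range (r + 3), b ^ (r + 3 - s) := by
      rw [Finset.mul_sum]
      exact Finset.sum_congr rfl fun s _ => by ring
    have h4 := SpiderWeb.geom_aux hb (r + 3)
    have h5 : (b:ℝ) ^ (r + 3 + 1) / (b - 1) = b ^ 4 / (b - 1) * b ^ r := by
      rw [show r + 3 + 1 = 4 + r by omega, pow_add]
      field_simp
    have hMD : (0:ℝ) ≤ ((M:ℝ) + 1) ^ D * C := by positivity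
    calc (({z | S.G.dist x z ≤ r} : Set V).ncard : ℝ)
        ≤ ((M:ℝ) + 1) ^ D * C * ∑ s ∈ Finset.range (r + 3), b ^ (r + 3 - s) := by
          rw [← h3]; exact h2
      _ ≤ ((M:ℝ) + 1) ^ D * C * (b ^ (r + 3 + 1) / (b - 1)) :=
          mul_le_mul_of_nonneg_left h4 hMD
      _ = ((M:ℝ) + 1) ^ D * C * (b ^ 4 / (b - 1)) * b ^ r := by rw [h5]; ring
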